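/- Let k_2 > 0 and q ≥ 0, and let S : ℝ → ℝ be measurable with S(x) ≥ 0 for all x ≥ 0, S integrable on [0, q], and S(x) = k_2·x for all x > q. Let A = {(x, y) ∈ ℝ² : 0 ≤ x and 0 ≤ y ≤ S(x)} and let λ denote two-dimensional Lebesgue measure. Then the limit lim_{B→∞} λ(A ∩ [0,B]²)/B² exists and equals 1 − 1/(2k_2) if k_2 > 1, and equals k_2/2 if k_2 ≤ 1. -/

import Mathlib

open MeasureTheory Filter

/-- Fractional area of the region below a curve that is eventually the line `y = k₂·x`. -/
theorem stmt_6 (k2 q : ℝ) (hk2 : 0 < k2) (hq : 0 ≤ q)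
    (S : ℝ → ℝ) (hmeas : Measurable S) (hpos : ∀ x, 0 ≤ x → 0 ≤ S x)
    (hint : IntegrableOn S (Set.Icc 0 q))
    (hlin : ∀ x, q < x → S x = k2 * x) :
    Tendsto
      (fun B : ℝ =>
        (volume ({p : ℝ × ℝ | 0 ≤ p.1 ∧ 0 ≤ p.2 ∧ p.2 ≤ S p.1} ∩
          Set.Icc 0 B ×ˢ Set.Icc 0 B)).toReal / B ^ 2)
      atTop
      (nhds (if 1 < k2 then 1 - 1 / (2 * k2) else k2 / 2)) := by
  classical
  set L : ℝ := if 1 < k2 then 1 - 1 / (2 * k2) else k2 / 2 with hL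
  set J : ℝ → ℝ := fun B =>
    if 1 < k2 then B ^ 2 * (1 - 1 / (2 * k2)) - k2 * q ^ 2 / 2
    else k2 * (B ^ 2 - q ^ 2) / 2 with hJ
  set C : ENNReal := ∫⁻ x in Set.Icc 0 q, ENNReal.ofReal (S x) with hCdef
  set I1 : ℝ → ENNReal :=
    fun B => ∫⁻ x in Set.Icc 0 q, ENNReal.ofReal (min (S x) B) with hI1def
  have hCfin : C < ⊤ := by
    have h1 : C ≤ ∫⁻ x in Set.Icc 0 q, ‖S x‖₊ := by
      refine lintegral_mono fun x => ?_
      exact Real.ofReal_le_enorm (S x)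
    exact lt_of_le_of_lt h1 hint.2
  have hI1le : ∀ B : ℝ, I1 B ≤ C := by
    intro B
    refine lintegral_mono fun x => ENNReal.ofReal_le_ofReal (min_le_left _ _)
  -- volume formula
  have hvol : ∀ B : ℝ, q ≤ B →
      volume ({p : ℝ × ℝ | 0 ≤ p.1 ∧ 0 ≤ p.2 ∧ p.2 ≤ S p.1} ∩
          Set.Icc 0 B ×ˢ Set.Icc 0 B)
        = I1 B + ∫⁻ x in Set.Ioc q B, ENNReal.ofReal (min (S x) B) := by
    intro B hB
    have h0B : (0:ℝ) ≤ B := le_trans hq hB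
    have hFmeas : MeasurableSet ({p : ℝ × ℝ | 0 ≤ p.1 ∧ 0 ≤ p.2 ∧ p.2 ≤ S p.1} ∩
        Set.Icc 0 B ×ˢ Set.Icc 0 B) := by
      refine MeasurableSet.inter ?_ (measurableSet_Icc.prod measurableSet_Icc)
      refine MeasurableSet.inter (measurableSet_le measurable_const measurable_fst) ?_
      exact MeasurableSet.inter (measurableSet_le measurable_const measurable_snd)
        (measurableSet_le measurable_snd (hmeas.comp measurable_fst))
    rw [Measure.volume_eq_prod, Measure.prod_apply hFmeas]
    have hslice : ∀ x : ℝ, volume (Prod.mk x ⁻¹'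
        ({p : ℝ × ℝ | 0 ≤ p.1 ∧ 0 ≤ p.2 ∧ p.2 ≤ S p.1} ∩ Set.Icc 0 B ×ˢ Set.Icc 0 B))
        = (Set.Icc 0 B).indicator (fun x => ENNReal.ofReal (min (S x) B)) x := by
      intro x
      by_cases hx : x ∈ Set.Icc (0:ℝ) B
      · have hset : Prod.mk x ⁻¹'
            ({p : ℝ × ℝ | 0 ≤ p.1 ∧ 0 ≤ p.2 ∧ p.2 ≤ S p.1} ∩ Set.Icc 0 B ×ˢ Set.Icc 0 B)
            = Set.Icc 0 (min (S x) B) := by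
          ext y
          simp only [Set.mem_preimage, Set.mem_inter_iff, Set.mem_setOf_eq, Set.mem_prod,
            Set.mem_Icc, le_min_iff]
          constructor
          · rintro ⟨⟨_, h0y, hyS⟩, _, _, hyB⟩
            exact ⟨h0y, hyS, hyB⟩
          · rintro ⟨h0y, hyS, hyB⟩
            exact ⟨⟨hx.1, h0y, hyS⟩, ⟨hx.1, hx.2⟩, h0y, hyB⟩
        rw [hset, Set.indicator_of_mem hx, Real.volume_Icc, sub_zero]
      · have hset : Prod.mk x ⁻¹'
            ({p : ℝ × ℝ | 0 ≤ p.1 ∧ 0 ≤ p.2 ∧ p.2 ≤ S p.1} ∩ Set.Icc 0 B ×ˢ Set.Icc 0 B)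
            = ∅ := by
          ext y
          simp only [Set.mem_preimage, Set.mem_inter_iff, Set.mem_setOf_eq, Set.mem_prod,
            Set.mem_Icc, Set.mem_empty_iff_false, iff_false]
          rintro ⟨_, ⟨hx1, hx2⟩, _⟩
          exact hx ⟨hx1, hx2⟩
        rw [hset, Set.indicator_of_notMem hx, measure_empty]
    simp only [hslice]
    rw [lintegral_indicator measurableSet_Icc,
      ← Set.Icc_union_Ioc_eq_Icc hq hB,
      lintegral_union measurableSet_Ioc
        (by rw [Set.disjoint_left]; rintro x ⟨_, hxq⟩ ⟨hqx, _⟩; exact absurd hqx (not_lt.2 hxq))]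
  -- the main-part integral
  have hI2 : ∀ B : ℝ, q ≤ B → k2 * q ≤ B →
      (∫⁻ x in Set.Ioc q B, ENNReal.ofReal (min (S x) B)) = ENNReal.ofReal (J B) := by
    intro B hqB hkqB
    have h0B : (0:ℝ) ≤ B := le_trans hq hqB
    have hcont : Continuous (fun x : ℝ => min (k2 * x) B) :=
      (continuous_const.mul continuous_id).min continuous_const
    have hcongr : (∫⁻ x in Set.Ioc q B, ENNReal.ofReal (min (S x) B))
        = ∫⁻ x in Set.Ioc q B, ENNReal.ofReal (min (k2 * x) B) := by
      refine setLIntegral_congr_fun measurableSet_Ioc (fun x hx => ?_)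
      rw [hlin x hx.1]
    have hint2 : IntegrableOn (fun x : ℝ => min (k2 * x) B) (Set.Ioc q B) :=
      (hcont.integrableOn_Icc (a := q) (b := B)).mono_set Set.Ioc_subset_Icc_self
    have hnn : (0:ℝ → ℝ) ≤ᶠ[ae (volume.restrict (Set.Ioc q B))] fun x => min (k2 * x) B := by
      filter_upwards [ae_restrict_mem measurableSet_Ioc] with x hx
      have : (0:ℝ) ≤ x := le_trans hq hx.1.le
      exact le_min (mul_nonneg hk2.le this) h0B
    rw [hcongr, ← ofReal_integral_eq_lintegral_ofReal hint2 hnn]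
    congr 1
    rw [← intervalIntegral.integral_of_le hqB]
    by_cases hk : 1 < k2
    · -- split at B / k2
      have hm1 : q ≤ B / k2 := (le_div_iff₀ hk2).2 (by linarith [hkqB])
      have hm2 : B / k2 ≤ B := div_le_self h0B hk.le
      have hi1 : IntervalIntegrable (fun x : ℝ => min (k2 * x) B) volume q (B / k2) :=
        hcont.intervalIntegrable _ _
      have hi2 : IntervalIntegrable (fun x : ℝ => min (k2 * x) B) volume (B / k2) B :=
        hcont.intervalIntegrable _ _
      rw [← intervalIntegral.integral_add_adjacent_intervals hi1 hi2]
      have e1 : (∫ x in q..(B / k2), min (k2 * x) B) = ∫ x in q..(B / k2), k2 * x := by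
        refine intervalIntegral.integral_congr fun x hx => ?_
        rw [Set.uIcc_of_le hm1] at hx
        have : k2 * x ≤ B := by
          have := hx.2
          calc k2 * x ≤ k2 * (B / k2) := by nlinarith
            _ = B := by field_simp
        exact min_eq_left this
      have e2 : (∫ x in (B / k2)..B, min (k2 * x) B) = ∫ x in (B / k2)..B, B := by
        refine intervalIntegral.integral_congr fun x hx => ?_
        rw [Set.uIcc_of_le hm2] at hx
        have : B ≤ k2 * x := by
          have h := hx.1
          have : B / k2 * k2 ≤ x * k2 := by nlinarith
          have hB' : B / k2 * k2 = B := by field_simp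
          nlinarith
        exact min_eq_right this
      rw [e1, e2, intervalIntegral.integral_const_mul, integral_id,
        intervalIntegral.integral_const, smul_eq_mul, hJ]
      simp only [if_pos hk]
      field_simp
      ring
    · -- k2 ≤ 1
      have hk' : k2 ≤ 1 := not_lt.1 hk
      have e : (∫ x in q..B, min (k2 * x) B) = ∫ x in q..B, k2 * x := by
        refine intervalIntegral.integral_congr fun x hx => ?_
        rw [Set.uIcc_of_le hqB] at hx
        have h0x : (0:ℝ) ≤ x := le_trans hq hx.1
        have : k2 * x ≤ B := by nlinarith [hx.2]
        exact min_eq_left this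
      rw [e, intervalIntegral.integral_const_mul, integral_id, hJ]
      simp only [if_neg hk]
      ring
  -- nonnegativity of J eventually
  have hJnn : ∀ B : ℝ, q ≤ B → k2 * q ≤ B → 0 ≤ J B := by
    intro B hqB hkqB
    rw [hJ]
    by_cases hk : 1 < k2
    · simp only [if_pos hk]
      have h1 : 1 / (2 * k2) ≤ 1 / 2 := by
        apply div_le_div_of_nonneg_left (by norm_num) (by norm_num) (by linarith)
      have h2 : k2 * q ≤ B := hkqB
      nlinarith [sq_nonneg B, sq_nonneg q, sq_nonneg (B - k2 * q)]
    · simp only [if_neg hk]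
      have h0B : (0:ℝ) ≤ B := le_trans hq hqB
      have hq2 : q ^ 2 ≤ B ^ 2 := by nlinarith
      have : (0:ℝ) ≤ k2 * (B ^ 2 - q ^ 2) := mul_nonneg hk2.le (by linarith)
      linarith
  -- eventual formula for f
  have hform : ∀ᶠ B in (atTop : Filter ℝ),
      (volume ({p : ℝ × ℝ | 0 ≤ p.1 ∧ 0 ≤ p.2 ∧ p.2 ≤ S p.1} ∩
        Set.Icc 0 B ×ˢ Set.Icc 0 B)).toReal / B ^ 2
      = ((I1 B).toReal + J B) / B ^ 2 := by
    filter_upwards [eventually_ge_atTop q, eventually_ge_atTop (k2 * q)] with B hqB hkqB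
    rw [hvol B hqB, hI2 B hqB hkqB,
      ENNReal.toReal_add (lt_of_le_of_lt (hI1le B) hCfin).ne ENNReal.ofReal_ne_top,
      ENNReal.toReal_ofReal (hJnn B hqB hkqB)]
  -- limits of bounds
  have hB2 : Tendsto (fun B : ℝ => B ^ 2) atTop atTop := tendsto_pow_atTop two_ne_zero
  have hg : Tendsto (fun B : ℝ => J B / B ^ 2) atTop (nhds L) := by
    have h0 : Tendsto (fun B : ℝ => (k2 * q ^ 2 / 2) / B ^ 2) atTop (nhds 0) :=
      Tendsto.div_atTop tendsto_const_nhds hB2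
    by_cases hk : 1 < k2
    · have hmain : Tendsto (fun B : ℝ => (1 - 1 / (2 * k2)) - (k2 * q ^ 2 / 2) / B ^ 2)
          atTop (nhds ((1 - 1 / (2 * k2)) - 0)) := tendsto_const_nhds.sub h0
      rw [sub_zero] at hmain
      have hLeq : L = 1 - 1 / (2 * k2) := by rw [hL, if_pos hk]
      rw [hLeq]
      refine Tendsto.congr' ?_ hmain
      filter_upwards [eventually_ge_atTop (1:ℝ)] with B hB1
      have hBne : B ^ 2 ≠ 0 := by positivity
      rw [hJ]; simp only [if_pos hk]; field_simp
    · have hmain : Tendsto (fun B : ℝ => k2 / 2 - (k2 * q ^ 2 / 2) / B ^ 2)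
          atTop (nhds (k2 / 2 - 0)) := tendsto_const_nhds.sub h0
      rw [sub_zero] at hmain
      have hLeq : L = k2 / 2 := by rw [hL, if_neg hk]
      rw [hLeq]
      refine Tendsto.congr' ?_ hmain
      filter_upwards [eventually_ge_atTop (1:ℝ)] with B hB1
      have hBne : B ^ 2 ≠ 0 := by positivity
      rw [hJ]; simp only [if_neg hk]; field_simp
  have hh : Tendsto (fun B : ℝ => (C.toReal + J B) / B ^ 2) atTop (nhds L) := by
    have h0 : Tendsto (fun B : ℝ => C.toReal / B ^ 2) atTop (nhds 0) :=
      Tendsto.div_atTop tendsto_const_nhds hB2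
    have := h0.add hg
    rw [zero_add] at this
    refine this.congr fun B => ?_
    rw [add_div]
  -- squeeze
  refine tendsto_of_tendsto_of_tendsto_of_le_of_le' hg hh ?_ ?_
  · filter_upwards [hform, eventually_ge_atTop (1:ℝ)] with B hfB hB1
    rw [hfB]
    have hBpos : (0:ℝ) < B ^ 2 := by positivity
    apply div_le_div_of_nonneg_right ?_ hBpos.le
    have : (0:ℝ) ≤ (I1 B).toReal := ENNReal.toReal_nonneg
    linarith
  · filter_upwards [hform, eventually_ge_atTop (1:ℝ)] with B hfB hB1
    rw [hfB]
    have hBpos : (0:ℝ) < B ^ 2 := by positivity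
    apply div_le_div_of_nonneg_right ?_ hBpos.le
    have hle : (I1 B).toReal ≤ C.toReal :=
      ENNReal.toReal_mono hCfin.ne (hI1le B)
    linarith
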